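/- For all integers n ≥ 2 and i ≥ 1, the Lucas numbers satisfy L_{ni+i} = L_i^{n−1} · L_{2i} − (−1)^i · Σ_{j=1}^{n−1} L_i^{n−1−j} · L_{ij}. -/

import Mathlib

lemma lucasC (L : ℕ → ℤ) (hL0 : L 0 = 2) (hL1 : L 1 = 1)
    (hL : ∀ n : ℕ, L (n + 2) = L (n + 1) + L n) :
    ∀ k, L (k + 2) * L k - L (k + 1) ^ 2 = 5 * (-1) ^ k := by
  intro k
  induction k with
  | zero => rw [hL 0, hL0, hL1]; ring
  | succ k ih =>
    have h1 : L (k + 2) = L (k + 1) + L k := hL k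
    have h2 : L (k + 3) = L (k + 2) + L (k + 1) := hL (k + 1)
    rw [h1] at ih h2
    show L (k + 3) * L (k + 1) - L (k + 2) ^ 2 = 5 * (-1) ^ (k + 1)
    rw [h2, h1, pow_succ]
    linear_combination -ih

lemma lucasAB (L : ℕ → ℤ) (hL0 : L 0 = 2) (hL1 : L 1 = 1)
    (hL : ∀ n : ℕ, L (n + 2) = L (n + 1) + L n) :
    ∀ k, L (2 * k) = L k ^ 2 - 2 * (-1) ^ k ∧
         L (2 * k + 1) = L k * L (k + 1) - (-1) ^ k := by
  intro k
  induction k with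
  | zero => norm_num [hL0, hL1]
  | succ k ih =>
    obtain ⟨hA, hB⟩ := ih
    have hC := lucasC L hL0 hL1 hL k
    have h3 : L (k + 2) = L (k + 1) + L k := hL k
    rw [h3] at hC
    have h1 : L (2 * k + 2) = L (2 * k + 1) + L (2 * k) := hL (2 * k)
    have h2 : L (2 * k + 3) = L (2 * k + 2) + L (2 * k + 1) := hL (2 * k + 1)
    constructor
    · show L (2 * (k + 1)) = _
      rw [show 2 * (k + 1) = 2 * k + 2 by ring, h1, hA, hB, pow_succ]
      linear_combination hC
    · show L (2 * (k + 1) + 1) = _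
      rw [show 2 * (k + 1) + 1 = 2 * k + 3 by ring, h2, h1, hA, hB, h3, pow_succ]
      linear_combination hC

lemma lucasR (L : ℕ → ℤ) (hL0 : L 0 = 2) (hL1 : L 1 = 1)
    (hL : ∀ n : ℕ, L (n + 2) = L (n + 1) + L n) (k : ℕ) :
    ∀ m, L (m + 2 * k) = L (m + k) * L k - (-1) ^ k * L m := by
  intro m
  induction m using Nat.twoStepInduction with
  | zero =>
    have := (lucasAB L hL0 hL1 hL k).1
    simp only [Nat.zero_add, this, hL0]; ring
  | one =>
    have := (lucasAB L hL0 hL1 hL k).2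
    rw [show 1 + 2 * k = 2 * k + 1 by ring, show 1 + k = k + 1 by ring, this, hL1]; ring
  | more m ih1 ih2 =>
    rw [show m + 1 + 2 * k = m + 2 * k + 1 by ring, show m + 1 + k = m + k + 1 by ring] at ih2
    rw [show m + 2 + 2 * k = m + 2 * k + 2 by ring, show m + 2 + k = m + k + 2 by ring,
      hL (m + 2 * k), hL (m + k), ih1, ih2, hL m]
    ring

theorem lucas_sum (L : ℕ → ℤ)
    (hL0 : L 0 = 2) (hL1 : L 1 = 1)
    (hL : ∀ n : ℕ, L (n + 2) = L (n + 1) + L n)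
    (n i : ℕ) (hn : 2 ≤ n) (hi : 1 ≤ i) :
    L (n * i + i) = L i ^ (n - 1) * L (2 * i) -
      (-1 : ℤ) ^ i * ∑ j ∈ Finset.Icc 1 (n - 1), L i ^ (n - 1 - j) * L (i * j) := by
  induction n, hn using Nat.le_induction with
  | base =>
    have hR := lucasR L hL0 hL1 hL i i
    norm_num
    rw [show 2 * i + i = i + 2 * i by ring, hR, show i + i = 2 * i by ring, mul_comm (L (2*i))]
  | succ n hn ih =>
    obtain ⟨m, rfl⟩ : ∃ m, n = m + 1 := ⟨n - 1, by omega⟩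
    have hm : 1 ≤ m := by omega
    simp only [Nat.add_sub_cancel] at ih ⊢
    have hR := lucasR L hL0 hL1 hL i ((m + 1) * i)
    have hsplit : ∑ j ∈ Finset.Icc 1 (m + 1), L i ^ (m + 1 - j) * L (i * j)
        = (∑ j ∈ Finset.Icc 1 m, L i ^ (m + 1 - j) * L (i * j))
          + L i ^ (m + 1 - (m + 1)) * L (i * (m + 1)) :=
      Finset.sum_Icc_succ_top (by omega) _
    have hsum2 : L i * ∑ j ∈ Finset.Icc 1 m, L i ^ (m - j) * L (i * j)
        = ∑ j ∈ Finset.Icc 1 m, L i ^ (m + 1 - j) * L (i * j) := by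
      rw [Finset.mul_sum]
      apply Finset.sum_congr rfl
      intro j hj
      simp only [Finset.mem_Icc] at hj
      rw [show m + 1 - j = (m - j) + 1 by omega, pow_succ]
      ring
    rw [show (m + 1 + 1) * i + i = (m + 1) * i + 2 * i by ring, hR, ih, hsplit,
      Nat.sub_self, pow_zero, one_mul, mul_comm i (m + 1)]
    linear_combination (-(-1 : ℤ) ^ i) * hsum2
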